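/- arXiv:2209.13636 — 2 statements merged into one kernel-verified Lean document; each statement's English description precedes it below -/
import Mathlib

section
/- The length function \(\ell(n) = \lfloor\log_2 n\rfloor + 2\lfloor\log_2(\lfloor\log_2 n\rfloor + 1)\rfloor + 3\) for \(n \ge 1\) satisfies the Kraft inequality \(\sum_{n=1}^\infty 2^{-\ell(n)} \le 1\). -/
/-- The Elias-style codeword length function
`ℓ(n) = ⌊log₂ n⌋ + 2⌊log₂(⌊log₂ n⌋+1)⌋ + 3` for `n ≥ 1`. -/
def eliasLen (n : ℕ) : ℕ := Nat.log 2 n + 2 * Nat.log 2 (Nat.log 2 n + 1) + 3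

open ENNReal NNReal

def dyadicEquiv : (Σ k : ℕ, Fin (2 ^ k)) ≃ ℕ where
  toFun p := 2 ^ p.1 + p.2.1 - 1
  invFun n := ⟨Nat.log 2 (n + 1),
    ⟨n + 1 - 2 ^ Nat.log 2 (n + 1), by
      have h1 := Nat.pow_log_le_self 2 (by omega : n + 1 ≠ 0)
      have h2 := Nat.lt_pow_succ_log_self (b := 2) (by norm_num) (n + 1)
      rw [pow_succ] at h2
      omega⟩⟩
  left_inv := by
    rintro ⟨k, j, hj⟩
    have hk1 : (1:ℕ) ≤ 2 ^ k := Nat.one_le_two_pow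
    have he : 2 ^ k + (j : ℕ) - 1 + 1 = 2 ^ k + j := by omega
    have hlog : Nat.log 2 (2 ^ k + j) = k := by
      apply Nat.log_eq_of_pow_le_of_lt_pow (by omega)
      rw [pow_succ]; omega
    refine Sigma.ext ?_ ?_
    · show Nat.log 2 (2 ^ k + (j : ℕ) - 1 + 1) = k
      rw [he, hlog]
    · refine (Fin.heq_ext_iff ?_).mpr ?_
      · show 2 ^ Nat.log 2 (2 ^ k + (j : ℕ) - 1 + 1) = 2 ^ k
        rw [he, hlog]
      · show 2 ^ k + (j : ℕ) - 1 + 1 - 2 ^ Nat.log 2 (2 ^ k + (j : ℕ) - 1 + 1) = j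
        rw [he, hlog]; omega
  right_inv := by
    intro n
    have h1 := Nat.pow_log_le_self 2 (by omega : n + 1 ≠ 0)
    show 2 ^ Nat.log 2 (n + 1) + (n + 1 - 2 ^ Nat.log 2 (n + 1)) - 1 = n
    omega

lemma regroup (g : ℕ → ℝ≥0∞) :
    ∑' n : ℕ, g (Nat.log 2 (n + 1)) / 2 ^ Nat.log 2 (n + 1) = ∑' k : ℕ, g k := by
  rw [← dyadicEquiv.tsum_eq (fun n => g (Nat.log 2 (n + 1)) / 2 ^ Nat.log 2 (n + 1)),
    ENNReal.tsum_sigma']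
  have key : ∀ p : Σ k : ℕ, Fin (2 ^ k),
      g (Nat.log 2 (dyadicEquiv p + 1)) / 2 ^ Nat.log 2 (dyadicEquiv p + 1)
        = g p.1 / 2 ^ p.1 := by
    rintro ⟨k, j, hj⟩
    have hk1 : (1:ℕ) ≤ 2 ^ k := Nat.one_le_two_pow
    have he : dyadicEquiv ⟨k, ⟨j, hj⟩⟩ + 1 = 2 ^ k + j := by
      show 2 ^ k + j - 1 + 1 = 2 ^ k + j; omega
    have hlog : Nat.log 2 (2 ^ k + j) = k := by
      apply Nat.log_eq_of_pow_le_of_lt_pow (by omega)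
      rw [pow_succ]; omega
    rw [he, hlog]
  calc ∑' (k : ℕ) (j : Fin (2 ^ k)),
      g (Nat.log 2 (dyadicEquiv ⟨k, j⟩ + 1)) / 2 ^ Nat.log 2 (dyadicEquiv ⟨k, j⟩ + 1)
      = ∑' (k : ℕ) (_ : Fin (2 ^ k)), g k / 2 ^ k := by
        congr 1; ext k; congr 1; ext j; exact key ⟨k, j⟩
    _ = ∑' k : ℕ, g k := by
        congr 1; ext k
        rw [tsum_fintype]
        simp only [Finset.sum_const, Finset.card_univ, Fintype.card_fin, nsmul_eq_mul]
        push_cast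
        rw [ENNReal.mul_div_cancel (by positivity) (ENNReal.pow_ne_top ENNReal.ofNat_ne_top)]

lemma pow_add_inv (a b : ℕ) :
    ((2 : ℝ≥0∞) ^ (a + b))⁻¹ = ((2 : ℝ≥0∞) ^ b)⁻¹ / 2 ^ a := by
  rw [pow_add, ENNReal.mul_inv (Or.inl (by norm_num)) (Or.inl (ENNReal.pow_ne_top ENNReal.ofNat_ne_top)),
    div_eq_mul_inv, mul_comm]

lemma eliasLen_kraft_ennreal : ∑' n : ℕ, ((2 : ℝ≥0∞) ^ eliasLen (n + 1))⁻¹ ≤ 1 := by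
  have h1 : ∑' n : ℕ, ((2 : ℝ≥0∞) ^ eliasLen (n + 1))⁻¹
      = ∑' k : ℕ, ((2 : ℝ≥0∞) ^ (2 * Nat.log 2 (k + 1) + 3))⁻¹ := by
    rw [← regroup (fun k => ((2 : ℝ≥0∞) ^ (2 * Nat.log 2 (k + 1) + 3))⁻¹)]
    congr 1; ext n
    rw [show eliasLen (n + 1)
        = Nat.log 2 (n + 1) + (2 * Nat.log 2 (Nat.log 2 (n + 1) + 1) + 3) from by
      rw [eliasLen]; ring, pow_add_inv]
  have h2 : ∑' k : ℕ, ((2 : ℝ≥0∞) ^ (2 * Nat.log 2 (k + 1) + 3))⁻¹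
      = ∑' m : ℕ, ((2 : ℝ≥0∞) ^ (m + 3))⁻¹ := by
    rw [← regroup (fun m => ((2 : ℝ≥0∞) ^ (m + 3))⁻¹)]
    congr 1; ext k
    rw [show 2 * Nat.log 2 (k + 1) + 3 = Nat.log 2 (k + 1) + (Nat.log 2 (k + 1) + 3) by ring,
      pow_add_inv]
  have h3 : ∑' m : ℕ, ((2 : ℝ≥0∞) ^ (m + 3))⁻¹ ≤ 1 := by
    have he : ∀ m : ℕ, ((2 : ℝ≥0∞) ^ (m + 3))⁻¹ = 8⁻¹ * (2⁻¹) ^ m := by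
      intro m
      rw [pow_add, ENNReal.mul_inv (Or.inl (by norm_num))
        (Or.inl (ENNReal.pow_ne_top ENNReal.ofNat_ne_top)), ENNReal.inv_pow]
      norm_num [mul_comm]
    simp_rw [he]
    rw [ENNReal.tsum_mul_left, ENNReal.tsum_geometric]
    rw [show (1 : ℝ≥0∞) - 2⁻¹ = 2⁻¹ by
      rw [ENNReal.sub_eq_of_eq_add (by simp)]
      rw [ENNReal.inv_two_add_inv_two], inv_inv]
    calc (8 : ℝ≥0∞)⁻¹ * 2 ≤ 8⁻¹ * 8 := mul_le_mul_right (by norm_num) _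
      _ = 1 := ENNReal.inv_mul_cancel (by norm_num) (by norm_num)
  rw [h1, h2]
  exact h3

/-- The length function `eliasLen` satisfies the Kraft inequality `∑_{n≥1} 2^{-ℓ(n)} ≤ 1`. -/
theorem eliasLen_kraft : ∑' n : ℕ, ((2 : ℝ) ^ eliasLen (n + 1))⁻¹ ≤ 1 := by
  set a : ℕ → ℝ≥0 := fun n => ((2 : ℝ≥0) ^ eliasLen (n + 1))⁻¹ with ha
  have hcoe : ∀ n, ((a n : ℝ≥0) : ℝ≥0∞) = ((2 : ℝ≥0∞) ^ eliasLen (n + 1))⁻¹ := by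
    intro n; simp [ha]
  have hEN : ∑' n : ℕ, ((a n : ℝ≥0) : ℝ≥0∞) ≤ 1 := by
    simp_rw [hcoe]; exact eliasLen_kraft_ennreal
  have hs : Summable a :=
    ENNReal.tsum_coe_ne_top_iff_summable.mp (by intro h; rw [h] at hEN; simp at hEN)
  have ht : (∑' n, a n : ℝ≥0) ≤ 1 := by
    rw [← ENNReal.coe_le_one_iff, ENNReal.coe_tsum hs]; exact hEN
  have : ∑' n : ℕ, ((2 : ℝ) ^ eliasLen (n + 1))⁻¹ = ((∑' n, a n : ℝ≥0) : ℝ) := by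
    rw [NNReal.coe_tsum]; exact tsum_congr fun n => by simp [ha]
  rw [this]
  exact_mod_cast ht
end

section
/- Let \(S : \mathbb{N} \to \mathbb{R}\) satisfy \(\lim_{n\to\infty} S(n)/n = s\) and \(S(n) \ge ns\) for all \(n\). Then the Hilberg exponents coincide: \(\mathrm{hilberg}_{n\to\infty}(S(n) - ns) = \mathrm{hilberg}_{n\to\infty}(2S(n) - S(2n))\), where \(\mathrm{hilberg}_{n\to\infty} T(n) := \max\{0, \limsup_{n\to\infty} \log T(n)/\log n\}\). -/
open Filter

/-- The Hilberg exponent `[limsup_n log T(n)/log n]₊`, with the convention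
`log 0 = -∞` (so nonpositive terms contribute `⊥` to the limsup). -/
noncomputable def hilbergExp (T : ℕ → ℝ) : EReal :=
  max 0 (Filter.limsup
    (fun n : ℕ => if T n ≤ 0 then (⊥ : EReal)
      else ((Real.log (T n) / Real.log n : ℝ) : EReal)) Filter.atTop)

lemma hilbergExp_le {T : ℕ → ℝ} {C δ : ℝ} (hC : 0 < C) (hδ : 0 < δ)
    (h : ∀ᶠ n : ℕ in atTop, T n ≤ C * (n : ℝ) ^ δ) :
    hilbergExp T ≤ (δ : EReal) := by
  have hδ' : (0 : EReal) ≤ (δ : EReal) := by exact_mod_cast hδ.le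
  refine max_le hδ' ?_
  rw [← EReal.le_of_forall_lt_iff_le]
  intro z hz
  have hzδ : δ < z := by exact_mod_cast hz
  apply Filter.limsup_le_of_le (by isBoundedDefault)
  have h2 : ∀ᶠ n : ℕ in atTop, Real.log C / (z - δ) ≤ Real.log n :=
    (Real.tendsto_log_atTop.comp tendsto_natCast_atTop_atTop).eventually_ge_atTop _
  filter_upwards [h, h2, eventually_ge_atTop 2] with n hn hn2 hn3
  by_cases hT : T n ≤ 0
  · simp [hT]
  · rw [if_neg hT]
    push_neg at hT
    have hn1 : (1 : ℝ) < n := by exact_mod_cast hn3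
    have hlogn : 0 < Real.log n := Real.log_pos hn1
    have hlog1 : Real.log (T n) ≤ Real.log C + δ * Real.log n := by
      calc Real.log (T n) ≤ Real.log (C * (n : ℝ) ^ δ) := Real.log_le_log hT hn
        _ = Real.log C + δ * Real.log n := by
            rw [Real.log_mul hC.ne' (by positivity), Real.log_rpow (by positivity)]
    have hlogC : Real.log C ≤ (z - δ) * Real.log n := by
      rw [div_le_iff₀ (by linarith)] at hn2
      linarith [hn2]
    have : Real.log (T n) / Real.log n ≤ z := by
      rw [div_le_iff₀ hlogn]; nlinarith
    exact_mod_cast this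

lemma le_rpow_of_hilbergExp_lt {T : ℕ → ℝ} {δ : ℝ} (h : hilbergExp T < (δ : EReal)) :
    ∀ᶠ n : ℕ in atTop, T n ≤ (n : ℝ) ^ δ := by
  have hlim := Filter.eventually_lt_of_limsup_lt (lt_of_le_of_lt (le_max_right _ _) h)
  filter_upwards [hlim, eventually_ge_atTop 2] with n hn hn2
  have hn1 : (1 : ℝ) < n := by exact_mod_cast hn2
  by_cases hT : T n ≤ 0
  · exact hT.trans (Real.rpow_nonneg (by positivity) δ)
  · push_neg at hT
    rw [if_neg (not_le.mpr hT)] at hn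
    have hr : Real.log (T n) / Real.log n < δ := by exact_mod_cast hn
    have hlogn : 0 < Real.log n := Real.log_pos hn1
    refine le_of_lt ?_
    rw [Real.lt_rpow_iff_log_lt hT (by positivity)]
    calc Real.log (T n) = Real.log (T n) / Real.log n * Real.log n := by
          field_simp
      _ < δ * Real.log n := mul_lt_mul_of_pos_right hr hlogn

lemma telescope (f g : ℕ → ℝ) (hfg : ∀ m, f m = g m / 2 + f (2 * m) / 2) (n K : ℕ) :
    f n = (∑ k ∈ Finset.range K, g (2 ^ k * n) / 2 ^ (k + 1)) + f (2 ^ K * n) / 2 ^ K := by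
  induction K with
  | zero => simp
  | succ K ih =>
    rw [ih, hfg (2 ^ K * n), Finset.sum_range_succ]
    have h2 : 2 * (2 ^ K * n) = 2 ^ (K + 1) * n := by ring
    rw [h2]
    ring

/-- If `S n / n → s` and `S n ≥ n·s`, then the Hilberg exponents of
`S(n) - n·s` and `2 S(n) - S(2n)` coincide. -/
theorem hilberg_identity (S : ℕ → ℝ) (s : ℝ)
    (hlim : Filter.Tendsto (fun n : ℕ => S n / n) Filter.atTop (nhds s))
    (hge : ∀ n : ℕ, (n : ℝ) * s ≤ S n) :
    hilbergExp (fun n => S n - n * s) = hilbergExp (fun n => 2 * S n - S (2 * n)) := by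
  set f : ℕ → ℝ := fun n => S n - n * s with hf
  set g : ℕ → ℝ := fun n => 2 * S n - S (2 * n) with hgdef
  have hf0 : ∀ n, 0 ≤ f n := fun n => sub_nonneg.mpr (hge n)
  -- f n / n → 0
  have hfl : Filter.Tendsto (fun n : ℕ => f n / n) atTop (nhds 0) := by
    have h1 : Filter.Tendsto (fun n : ℕ => S n / n - s) atTop (nhds 0) := by
      simpa using hlim.sub_const s
    refine h1.congr' ?_
    filter_upwards [eventually_ge_atTop 1] with n hn
    have hn0 : (n : ℝ) ≠ 0 := by positivity
    field_simp [hf]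
    rfl
  -- hilbergExp f ≤ 1
  have hfile : hilbergExp f ≤ (1 : ℝ) := by
    refine hilbergExp_le one_pos one_pos ?_
    have h1 : ∀ᶠ n : ℕ in atTop, f n / n < 1 := hfl.eventually_lt_const one_pos
    filter_upwards [h1, eventually_ge_atTop 1] with n hn hn1
    have hn0 : (0 : ℝ) < n := by exact_mod_cast hn1
    rw [div_lt_one hn0] at hn
    rw [one_mul, Real.rpow_one]
    exact hn.le
  have hgf : ∀ n, g n = 2 * f n - f (2 * n) := by
    intro n
    simp only [hf, hgdef]
    push_cast
    ring
  apply le_antisymm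
  · -- hilbergExp f ≤ hilbergExp g
    rw [← EReal.le_of_forall_lt_iff_le]
    intro z hz
    have hz0 : (0 : ℝ) < z := by
      have : (0 : EReal) < (z : EReal) := lt_of_le_of_lt (le_max_left _ _) hz
      exact_mod_cast this
    by_cases hz1 : (1 : ℝ) ≤ z
    · exact hfile.trans (by exact_mod_cast hz1)
    push_neg at hz1
    obtain ⟨N, hN⟩ := eventually_atTop.mp (le_rpow_of_hilbergExp_lt hz)
    set r : ℝ := (2 : ℝ) ^ (z - 1) with hrdef
    have hr0 : 0 < r := Real.rpow_pos_of_pos two_pos _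
    have hr1 : r < 1 := Real.rpow_lt_one_of_one_lt_of_neg one_lt_two (by linarith)
    set D : ℝ := (1 - r)⁻¹ / 2 with hDdef
    have hr1' : 0 < 1 - r := by linarith
    have hD : 0 < D := by positivity
    refine (hilbergExp_le hD hz0 ?_)
    filter_upwards [eventually_ge_atTop N, eventually_ge_atTop 1] with n hnN hn1
    -- f n ≤ D * n ^ z
    have hn0 : (0 : ℝ) < n := by exact_mod_cast hn1
    have htel := telescope f g (by
      intro m
      rw [hgf m]
      ring) n
    -- bound the partial sums
    have hsum : ∀ K : ℕ, (∑ k ∈ Finset.range K, g (2 ^ k * n) / 2 ^ (k + 1)) ≤ D * (n : ℝ) ^ z := by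
      intro K
      have hterm : ∀ k : ℕ, g (2 ^ k * n) / 2 ^ (k + 1) ≤ r ^ k / 2 * (n : ℝ) ^ z := by
        intro k
        have hm : N ≤ 2 ^ k * n := le_trans hnN (Nat.le_mul_of_pos_left n (by positivity))
        have hg1 : g (2 ^ k * n) ≤ ((2 ^ k * n : ℕ) : ℝ) ^ z := hN _ hm
        have hcast : ((2 ^ k * n : ℕ) : ℝ) = (2 : ℝ) ^ k * n := by push_cast; ring
        have hrw : ((2 : ℝ) ^ k * n) ^ z = (2 : ℝ) ^ ((k : ℝ) * z) * (n : ℝ) ^ z := by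
          rw [Real.mul_rpow (by positivity) (by positivity), ← Real.rpow_natCast 2 k,
            ← Real.rpow_mul (by norm_num)]
        have hpow : (2 : ℝ) ^ ((k : ℝ) * z) / 2 ^ (k + 1) = r ^ k / 2 := by
          rw [pow_succ, ← Real.rpow_natCast 2 k, hrdef, ← Real.rpow_natCast ((2:ℝ) ^ (z - 1)) k,
            ← Real.rpow_mul (by norm_num)]
          rw [div_mul_eq_div_div, ← Real.rpow_sub two_pos]
          ring_nf
        calc g (2 ^ k * n) / 2 ^ (k + 1) ≤ ((2:ℝ) ^ ((k : ℝ) * z) * (n : ℝ) ^ z) / 2 ^ (k + 1) := by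
              have hnum : g (2 ^ k * n) ≤ (2:ℝ) ^ ((k : ℝ) * z) * (n : ℝ) ^ z := by
                rw [← hrw, ← hcast]; exact hg1
              gcongr
          _ = r ^ k / 2 * (n : ℝ) ^ z := by
              rw [mul_comm ((2:ℝ) ^ ((k : ℝ) * z)) ((n:ℝ) ^ z), mul_div_assoc, hpow]
              ring
        
      calc (∑ k ∈ Finset.range K, g (2 ^ k * n) / 2 ^ (k + 1))
          ≤ ∑ k ∈ Finset.range K, r ^ k / 2 * (n : ℝ) ^ z :=
            Finset.sum_le_sum fun k _ => hterm k
        _ = (∑ k ∈ Finset.range K, r ^ k) / 2 * (n : ℝ) ^ z := by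
            rw [Finset.sum_div, Finset.sum_mul]
        _ ≤ (1 - r)⁻¹ / 2 * (n : ℝ) ^ z := by
            have := sum_le_hasSum (Finset.range K) (fun k _ => pow_nonneg hr0.le k)
              (hasSum_geometric_of_lt_one hr0.le hr1)
            have hle : (∑ k ∈ Finset.range K, r ^ k) / 2 ≤ (1 - r)⁻¹ / 2 := by linarith
            exact mul_le_mul_of_nonneg_right hle (by positivity)
        _ = D * (n : ℝ) ^ z := by rw [hDdef]
    -- tail tends to 0
    have hntop : Filter.Tendsto (fun K : ℕ => 2 ^ K * n) atTop atTop := by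
      have h2 : Filter.Tendsto (fun K : ℕ => 2 ^ K) atTop atTop :=
        tendsto_pow_atTop_atTop_of_one_lt one_lt_two
      exact tendsto_atTop_mono (fun K => Nat.le_mul_of_pos_right _ hn1) h2
    have htail : Filter.Tendsto (fun K : ℕ => f (2 ^ K * n) / 2 ^ K) atTop (nhds 0) := by
      have hc : Filter.Tendsto (fun K : ℕ => (n : ℝ) * (f (2 ^ K * n) / ((2 ^ K * n : ℕ) : ℝ)))
          atTop (nhds ((n : ℝ) * 0)) := (hfl.comp hntop).const_mul _
      rw [mul_zero] at hc
      refine hc.congr ?_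
      intro K
      have h2K : ((2 : ℝ)) ^ K ≠ 0 := by positivity
      have hne : (n : ℝ) ≠ 0 := hn0.ne'
      push_cast
      field_simp
    -- conclude
    have hK : ∀ K : ℕ, f n - D * (n : ℝ) ^ z ≤ f (2 ^ K * n) / 2 ^ K := by
      intro K
      have := htel K
      have := hsum K
      linarith
    have := ge_of_tendsto' htail hK
    linarith
  · -- hilbergExp g ≤ hilbergExp f
    rw [← EReal.le_of_forall_lt_iff_le]
    intro z hz
    have hz0 : (0 : ℝ) < z := by
      have : (0 : EReal) < (z : EReal) := lt_of_le_of_lt (le_max_left _ _) hz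
      exact_mod_cast this
    refine hilbergExp_le two_pos hz0 ?_
    filter_upwards [le_rpow_of_hilbergExp_lt hz] with n hn
    have : g n ≤ 2 * f n := by
      rw [hgf n]
      have := hf0 (2 * n)
      linarith
    calc g n ≤ 2 * f n := this
      _ ≤ 2 * (n : ℝ) ^ z := by linarith
end
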